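/- arXiv:2405.19696 — 5 statements merged into one kernel-verified Lean document; each statement's English description precedes it below -/
import Mathlib

section
/- For every integer d ≥ 1, any matrix W ∈ M_d(ℂ) (indexed by ZMod d) that commutes with every Weyl operator, i.e. W · U_{a,b} = U_{a,b} · W for all a, b ∈ ZMod d, is a scalar multiple of the identity matrix: there exists c ∈ ℂ with W = c • 1. -/
open Matrix

/-- `ω = exp(2πi/d)`. -/
noncomputable def weylOmega (d : ℕ) : ℂ :=
  Complex.exp (2 * Real.pi * Complex.I / d)

/-- The clock matrix `Z`, diagonal with entries `ω ^ s`. -/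
noncomputable def clockMatrix (d : ℕ) : Matrix (ZMod d) (ZMod d) ℂ :=
  Matrix.diagonal fun s => weylOmega d ^ s.val

/-- The shift matrix `X`, with entries `X s s' = 1` iff `s = s' + 1`. -/
def shiftMatrix (d : ℕ) : Matrix (ZMod d) (ZMod d) ℂ :=
  Matrix.of fun s s' => if s = s' + 1 then 1 else 0

/-- The Weyl operator `U_{a,b} = Z^a · X^b`. -/
noncomputable def weylOp (d : ℕ) [NeZero d] (a b : ZMod d) : Matrix (ZMod d) (ZMod d) ℂ :=
  clockMatrix d ^ a.val * shiftMatrix d ^ b.val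

theorem weyl_commutant_trivial (d : ℕ) (hd : 1 ≤ d) [NeZero d]
    (W : Matrix (ZMod d) (ZMod d) ℂ)
    (hW : ∀ a b : ZMod d, W * weylOp d a b = weylOp d a b * W) :
    ∃ c : ℂ, W = c • (1 : Matrix (ZMod d) (ZMod d) ℂ) := by
  refine ⟨W 0 0, ?_⟩
  rcases eq_or_lt_of_le hd with h1 | hd2
  · -- d = 1
    subst h1
    ext i j
    rw [Subsingleton.elim i (0 : ZMod 1), Subsingleton.elim j (0 : ZMod 1)]
    simp [Matrix.one_apply]
  · haveI : Fact (1 < d) := ⟨hd2⟩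
    have hZ : W * clockMatrix d = clockMatrix d * W := by
      have := hW 1 0
      simpa [weylOp, ZMod.val_one, ZMod.val_zero] using this
    have hX : W * shiftMatrix d = shiftMatrix d * W := by
      have := hW 0 1
      simpa [weylOp, ZMod.val_one, ZMod.val_zero] using this
    have hprim : IsPrimitiveRoot (weylOmega d) d := by
      simpa [weylOmega] using Complex.isPrimitiveRoot_exp d (NeZero.ne d)
    -- off-diagonal entries vanish
    have hoff : ∀ i j : ZMod d, i ≠ j → W i j = 0 := by
      intro i j hij
      have h1 := congrFun (congrFun hZ i) j
      rw [clockMatrix, Matrix.mul_diagonal, Matrix.diagonal_mul] at h1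
      have hne : weylOmega d ^ j.val ≠ weylOmega d ^ i.val := by
        intro h
        exact hij (ZMod.val_injective d (hprim.pow_inj j.val_lt i.val_lt h)).symm
      have : W i j * (weylOmega d ^ j.val - weylOmega d ^ i.val) = 0 := by
        rw [mul_sub, h1]; ring
      rcases mul_eq_zero.mp this with h | h
      · exact h
      · exact absurd (sub_eq_zero.mp h) hne
    -- diagonal entries are equal
    have hstep : ∀ s : ZMod d, W (s + 1) (s + 1) = W s s := by
      intro s
      have h2 := congrFun (congrFun hX (s + 1)) s
      simp only [Matrix.mul_apply, shiftMatrix, Matrix.of_apply, mul_ite, mul_one, mul_zero,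
        ite_mul, one_mul, zero_mul, add_left_inj] at h2
      rw [Finset.sum_ite_eq' _ (s + 1), Finset.sum_ite_eq _ s] at h2
      simpa using h2
    have hnat : ∀ n : ℕ, W (n : ZMod d) (n : ZMod d) = W 0 0 := by
      intro n
      induction n with
      | zero => simp
      | succ n ih =>
        have := hstep (n : ZMod d)
        push_cast
        rw [this, ih]
    have hdiag : ∀ i : ZMod d, W i i = W 0 0 := by
      intro i
      have : ((i.val : ℕ) : ZMod d) = i := by
        simp [ZMod.natCast_val, ZMod.cast_id]
      rw [← this]; exact hnat i.val
    ext i j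
    by_cases hij : i = j
    · subst hij
      simp [Matrix.one_apply, hdiag i]
    · simp [Matrix.one_apply, hij, hoff i j hij]
end

section
/- For every integer d ≥ 1, the joint fixed vectors of the doubled Weyl operators form a one-dimensional space spanned by the maximally entangled vector: if w : ZMod d × ZMod d → ℂ satisfies (U_{a,b} ⊗ₖ Ū_{a,b}).mulVec w = w for all a, b ∈ ZMod d, then there exists c ∈ ℂ with w = c • v, where v(k,l) = 1 if k = l and 0 otherwise. -/
open Matrix

lemma shift_pow_apply (d : ℕ) [NeZero d] (n : ℕ) (s s' : ZMod d) :
    (shiftMatrix d ^ n) s s' = if s = s' + (n : ZMod d) then 1 else 0 := by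
  induction n generalizing s s' with
  | zero => simp [Matrix.one_apply]
  | succ n ih =>
    rw [pow_succ, Matrix.mul_apply]
    rw [Finset.sum_eq_single (s' + 1)]
    · have h1 : s' + 1 + (n : ZMod d) = s' + ((n+1 : ℕ) : ZMod d) := by push_cast; ring
      rw [ih, h1]
      simp [shiftMatrix]
    · intro t _ ht
      simp [shiftMatrix, ht]
    · simp

lemma sum_delta (d : ℕ) [NeZero d] (b k : ZMod d) (f : ZMod d → ℂ) :
    (∑ x : ZMod d, (if k = x + b then 1 else 0) * f x) = f (k - b) := by
  rw [Finset.sum_eq_single (k - b)]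
  · simp
  · intro t _ ht
    have : k ≠ t + b := by
      intro h; exact ht (by rw [h]; ring)
    simp [this]
  · simp

open Kronecker in
theorem weyl_fixed_vector_unique (d : ℕ) (hd : 1 ≤ d) [NeZero d]
    (w : ZMod d × ZMod d → ℂ)
    (hw : ∀ a b : ZMod d,
      ((weylOp d a b) ⊗ₖ (weylOp d a b).map (starRingEnd ℂ)).mulVec w = w) :
    ∃ c : ℂ, w = c • (fun p : ZMod d × ZMod d => if p.1 = p.2 then (1 : ℂ) else 0) := by
  have hB : ∀ b k l : ZMod d, w (k - b, l - b) = w (k, l) := by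
    intro b k l
    have h := congrFun (hw 0 b) (k, l)
    rw [Matrix.mulVec] at h
    simp only [weylOp, ZMod.val_zero, pow_zero, one_mul, dotProduct,
      Matrix.kroneckerMap_apply, Matrix.map_apply, shift_pow_apply,
      ZMod.natCast_val, ZMod.cast_id, apply_ite (starRingEnd ℂ), _root_.map_one, _root_.map_zero,
      Fintype.sum_prod_type] at h
    -- h should be a double delta sum; inspect
    rw [show (∑ x : ZMod d, ∑ y : ZMod d,
        (if k = x + b then 1 else 0) * (if l = y + b then 1 else 0) * w (x, y))
        = w (k - b, l - b) from ?_] at h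
    · exact h
    · rw [← sum_delta d b k (fun x => w (x, l - b))]
      refine Finset.sum_congr rfl fun x _ => ?_
      simp only [mul_assoc]
      rw [← Finset.mul_sum, sum_delta d b l (fun y => w (x, y))]
  have hA : ∀ k l : ZMod d, k ≠ l → w (k, l) = 0 := by
    intro k l hkl
    have hd2 : 1 < d := by
      by_contra hle
      have hd1 : d = 1 := le_antisymm (not_lt.mp hle) hd
      subst hd1
      exact hkl (Subsingleton.elim k l)
    haveI : Fact (1 < d) := ⟨hd2⟩
    have hprim : IsPrimitiveRoot (weylOmega d) d :=
      Complex.isPrimitiveRoot_exp d (NeZero.ne d)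
    have habs : ‖weylOmega d‖ = 1 := by
      simp [weylOmega, Complex.norm_exp]
    have hM : weylOp d 1 0 = clockMatrix d := by
      rw [weylOp, ZMod.val_one, ZMod.val_zero, pow_zero, mul_one, pow_one]
    have h := congrFun (hw 1 0) (k, l)
    rw [hM, clockMatrix, Matrix.diagonal_map (map_zero _),
      Matrix.diagonal_kronecker_diagonal, Matrix.mulVec_diagonal] at h
    by_contra hw0
    have h1 : weylOmega d ^ k.val * (starRingEnd ℂ) (weylOmega d ^ l.val) = 1 :=
      mul_right_cancel₀ hw0 (h.trans (one_mul _).symm)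
    have hz : (starRingEnd ℂ) (weylOmega d ^ l.val) * weylOmega d ^ l.val = 1 := by
      rw [mul_comm, Complex.mul_conj, Complex.normSq_eq_norm_sq, norm_pow, habs]
      norm_num
    have h2 : weylOmega d ^ k.val = weylOmega d ^ l.val := by
      calc weylOmega d ^ k.val
          = weylOmega d ^ k.val * ((starRingEnd ℂ) (weylOmega d ^ l.val) * weylOmega d ^ l.val) := by
            rw [hz, mul_one]
        _ = (weylOmega d ^ k.val * (starRingEnd ℂ) (weylOmega d ^ l.val)) * weylOmega d ^ l.val := by
            ring
        _ = weylOmega d ^ l.val := by rw [h1, one_mul]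
    exact hkl (ZMod.val_injective d (hprim.pow_inj (ZMod.val_lt k) (ZMod.val_lt l) h2))
  refine ⟨w (0, 0), funext fun p => ?_⟩
  obtain ⟨k, l⟩ := p
  by_cases hkl : k = l
  · subst hkl
    have := hB k k k
    simp only [sub_self] at this
    simpa using this.symm
  · simp [hkl, hA k l hkl]
end

section
/- Let E be a complex Hilbert space, v ∈ E a unit vector, P : E →L[ℂ] E the orthogonal projection onto the span of v, and H : E →L[ℂ] E a self-adjoint bounded operator. Then P ∘ H ∘ (1 − P) ∘ H ∘ P = ‖(1 − P)(H v)‖² • P; in particular this operator is zero if and only if v is an eigenvector of H, i.e. H v = ⟪v, H v⟫ • v. -/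
open scoped InnerProductSpace

theorem rank_one_projection_sandwich
    {E : Type*} [NormedAddCommGroup E] [InnerProductSpace ℂ E] [CompleteSpace E]
    (v : E) (hv : ‖v‖ = 1)
    (P : E →L[ℂ] E) (hP : ∀ x : E, P x = ⟪v, x⟫_ℂ • v)
    (H : E →L[ℂ] E) (hH : IsSelfAdjoint H) :
    P ∘L H ∘L (1 - P) ∘L H ∘L P = ((‖(1 - P) (H v)‖ ^ 2 : ℝ) : ℂ) • P ∧
      (P ∘L H ∘L (1 - P) ∘L H ∘L P = 0 ↔ H v = ⟪v, H v⟫_ℂ • v) := by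
  have hvv : ⟪v, v⟫_ℂ = 1 := by
    rw [inner_self_eq_norm_sq_to_K, hv]; norm_num
  set w := (1 - P) (H v) with hwdef
  have hvw : ⟪v, w⟫_ℂ = 0 := by
    rw [hwdef]
    simp [ContinuousLinearMap.sub_apply, hP, inner_sub_right, inner_smul_right, hvv, hv]
  have hdecomp : H v = w + ⟪v, H v⟫_ℂ • v := by
    simp [hwdef, ContinuousLinearMap.sub_apply, hP]
  have hHvw : ⟪H v, w⟫_ℂ = ((‖w‖ ^ 2 : ℝ) : ℂ) := by
    rw [hdecomp, inner_add_left, inner_smul_left, hvw, mul_zero, add_zero,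
      inner_self_eq_norm_sq_to_K]
    norm_cast
  have hadj : ∀ y : E, ⟪v, H y⟫_ℂ = ⟪H v, y⟫_ℂ := by
    intro y
    rw [← ContinuousLinearMap.adjoint_inner_left, hH.adjoint_eq]
  have key : P ∘L H ∘L (1 - P) ∘L H ∘L P = ((‖(1 - P) (H v)‖ ^ 2 : ℝ) : ℂ) • P := by
    ext x
    simp only [ContinuousLinearMap.comp_apply, ContinuousLinearMap.smul_apply]
    rw [hP x, map_smul, map_smul, ← hwdef, map_smul, map_smul, hP (H w), hadj, hHvw]
    rw [smul_comm]
  refine ⟨key, ?_⟩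
  rw [key]
  constructor
  · intro h0
    have hv0 : v ≠ 0 := by
      intro h; rw [h, norm_zero] at hv; norm_num at hv
    have := congrArg (fun T : E →L[ℂ] E => T v) h0
    simp only [ContinuousLinearMap.smul_apply, ContinuousLinearMap.zero_apply, hP v, hvv,
      one_smul] at this
    have hw0 : w = 0 := by
      rcases smul_eq_zero.mp this with h | h
      · have : ‖w‖ ^ 2 = 0 := by exact_mod_cast h
        have : ‖w‖ = 0 := by nlinarith [norm_nonneg w]
        exact norm_eq_zero.mp this
      · exact absurd h hv0
    have := hdecomp
    rw [hw0, zero_add] at this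
    exact this
  · intro h
    have hw0 : w = 0 := by
      rw [hwdef]
      simp [ContinuousLinearMap.sub_apply, hP, ← h]
    rw [← hwdef, hw0, norm_zero]
    norm_num
end

section
/- Let A be a unital C*-algebra over ℂ and let (α_t)_{t ∈ ℝ} be a strongly continuous one-parameter group of *-automorphisms of A, i.e. α_0 = id, α_{s+t} = α_s ∘ α_t for all s, t ∈ ℝ, and for each a ∈ A the map t ↦ α_t(a) is continuous. Suppose that for all a, b ∈ A the commutator norms ‖α_n(a)·b − b·α_n(a)‖ tend to 0 as n → ∞ along the natural numbers. Then for all a, b ∈ A the commutator norms ‖α_t(a)·b − b·α_t(a)‖ tend to 0 as t → +∞ along the reals. -/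
open Filter Topology

theorem norm_asymptotic_abelian_discrete_to_continuous
    {A : Type*} [NormedRing A] [StarRing A] [CStarRing A] [NormedAlgebra ℂ A]
    [CompleteSpace A] [StarModule ℂ A]
    (α : ℝ → (A ≃⋆ₐ[ℂ] A))
    (h0 : ∀ a : A, α 0 a = a)
    (hadd : ∀ s t : ℝ, ∀ a : A, α (s + t) a = α s (α t a))
    (hcont : ∀ a : A, Continuous fun t : ℝ => α t a)
    (hdiscrete : ∀ a b : A,
      Tendsto (fun n : ℕ => ‖α n a * b - b * α n a‖) atTop (𝓝 0)) :
    ∀ a b : A, Tendsto (fun t : ℝ => ‖α t a * b - b * α t a‖) atTop (𝓝 0) := by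
  letI : CStarAlgebra A := {}
  intro a b
  rw [Metric.tendsto_nhds]
  intro ε hε
  -- the compact set of translates over one period
  have hK : IsCompact ((fun s : ℝ => α s a) '' Set.Icc (0:ℝ) 1) :=
    isCompact_Icc.image (hcont a)
  set δ : ℝ := ε / (4 * ‖b‖ + 2) with hδdef
  have hδ : 0 < δ := by positivity
  obtain ⟨T, hTsub, hTfin, hTcover⟩ := hK.finite_cover_balls hδ
  -- a uniform N for the finite net
  have hN : ∀ᶠ n : ℕ in atTop, ∀ x ∈ T, ‖α n x * b - b * α n x‖ < ε / 2 := by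
    rw [eventually_all_finite hTfin]
    intro x hx
    exact (hdiscrete x b).eventually (gt_mem_nhds (half_pos hε))
  obtain ⟨N, hN⟩ := eventually_atTop.1 hN
  filter_upwards [eventually_ge_atTop ((N : ℝ) + 1)] with t ht
  have ht0 : (0:ℝ) ≤ t := le_trans (by positivity) ht
  set n : ℕ := ⌊t⌋₊ with hn
  have hnN : N ≤ n := Nat.le_floor (by linarith)
  set s : ℝ := t - n with hs
  have hs0 : 0 ≤ s := by
    have := Nat.floor_le ht0
    simp only [hs]; linarith
  have hs1 : s ≤ 1 := by
    have := Nat.lt_floor_add_one t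
    simp only [hs]; linarith
  have hts : α t a = α n (α s a) := by
    have : ((n : ℝ) + s) = t := by simp [hs]
    rw [← this, hadd]
  set c : A := α s a with hc
  have hcK : c ∈ (fun s : ℝ => α s a) '' Set.Icc (0:ℝ) 1 :=
    ⟨s, ⟨hs0, hs1⟩, rfl⟩
  obtain ⟨x, hxT, hxc⟩ := Set.mem_iUnion₂.1 (hTcover hcK)
  have hdist : ‖c - x‖ < δ := by
    rw [← dist_eq_norm]; exact Metric.mem_ball.1 hxc
  have hnet : ‖α n x * b - b * α n x‖ < ε / 2 := hN n hnN x hxT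
  have hiso : ‖α n c - α n x‖ = ‖c - x‖ := by
    rw [← map_sub]; exact StarAlgEquiv.norm_map (α n) _
  have key : ‖α n c * b - b * α n c‖ < ε := by
    have h1 : α n c * b - b * α n c =
        (α n x * b - b * α n x) + ((α n c - α n x) * b - b * (α n c - α n x)) := by
      noncomm_ring
    rw [h1]
    calc ‖(α n x * b - b * α n x) + ((α n c - α n x) * b - b * (α n c - α n x))‖
        ≤ ‖α n x * b - b * α n x‖ + ‖(α n c - α n x) * b - b * (α n c - α n x)‖ :=
          norm_add_le _ _
      _ ≤ ‖α n x * b - b * α n x‖ + (‖(α n c - α n x) * b‖ + ‖b * (α n c - α n x)‖) := by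
          gcongr; exact norm_sub_le _ _
      _ ≤ ‖α n x * b - b * α n x‖ + (‖α n c - α n x‖ * ‖b‖ + ‖b‖ * ‖α n c - α n x‖) := by
          gcongr <;> [exact norm_mul_le _ _; exact norm_mul_le _ _]
      _ = ‖α n x * b - b * α n x‖ + 2 * ‖b‖ * ‖c - x‖ := by rw [hiso]; ring
      _ < ε / 2 + 2 * ‖b‖ * δ := by
          have hb : 0 ≤ ‖b‖ := norm_nonneg b
          have h2 : 2 * ‖b‖ * ‖c - x‖ ≤ 2 * ‖b‖ * δ := by
            rcases eq_or_lt_of_le hb with h | h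
            · simp [← h]
            · exact mul_le_mul_of_nonneg_left hdist.le (by positivity)
          linarith
      _ ≤ ε / 2 + ε / 2 := by
          have : 2 * ‖b‖ * δ ≤ ε / 2 := by
            rw [hδdef, ← mul_div_assoc,
              div_le_div_iff₀ (by positivity : (0:ℝ) < 4 * ‖b‖ + 2) two_pos]
            nlinarith [norm_nonneg b, hε.le]
          linarith
      _ = ε := by ring
  rw [hts]
  simpa [Real.dist_eq, abs_of_nonneg (norm_nonneg _)] using key
end

section
/- Let d ≥ 2, let j, k ∈ Fin d with j ≠ k, and in M_d(ℂ) ⊗ M_d(ℂ) (matrices indexed by Fin d × Fin d) define the exchange term S := stdBasisMatrix (j,k) (k,j) 1 + stdBasisMatrix (k,j) (j,k) 1, and in M_d(ℂ) define B := stdBasisMatrix j j 1 − stdBasisMatrix k k 1. Then for all α, β, α', β' ∈ ℝ with α − β = α' − β', (exp(iαB) ⊗ₖ exp(iβB)) · S · (exp(−iαB) ⊗ₖ exp(−iβB)) = (exp(iα'B) ⊗ₖ exp(iβ'B)) · S · (exp(−iα'B) ⊗ₖ exp(−iβ'B)); i.e. conjugation of S by the product rotation depends only on α − β. -/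
open Matrix Kronecker

lemma diag_mul_std_mul_diag {n : Type*} [Fintype n] [DecidableEq n]
    (u v : n → ℂ) (p q : n) :
    diagonal u * single p q (1:ℂ) * diagonal v
      = (u p * v q) • single p q (1:ℂ) := by
  ext a b
  simp [mul_apply, single, diagonal_apply, ite_and, Finset.sum_ite_eq,
    Finset.sum_ite_eq', mul_comm]
  aesop

lemma smulB_eq_diagonal (d : ℕ) (j k : Fin d) (hjk : j ≠ k) (c : ℂ)
    (B : Matrix (Fin d) (Fin d) ℂ)
    (hB : B = Matrix.single j j (1 : ℂ) - Matrix.single k k (1 : ℂ)) :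
    c • B = diagonal (fun p => if p = j then c else if p = k then -c else 0) := by
  subst hB
  ext a b
  by_cases hab : a = b
  · subst hab
    by_cases h1 : a = j <;> by_cases h2 : a = k <;>
      simp [single, diagonal_apply, h1, h2, hjk] <;> aesop
  · simp [single, diagonal_apply, hab]
    aesop

lemma conj_form (d : ℕ) (j k : Fin d) (hjk : j ≠ k)
    (S : Matrix (Fin d × Fin d) (Fin d × Fin d) ℂ)
    (hS : S = Matrix.single (j, k) (k, j) (1 : ℂ) +
        Matrix.single (k, j) (j, k) (1 : ℂ))
    (B : Matrix (Fin d) (Fin d) ℂ)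
    (hB : B = Matrix.single j j (1 : ℂ) - Matrix.single k k (1 : ℂ))
    (t s : ℝ) :
    (NormedSpace.exp ((Complex.I * t) • B) ⊗ₖ NormedSpace.exp ((Complex.I * s) • B)) * S *
      (NormedSpace.exp ((-Complex.I * t) • B) ⊗ₖ NormedSpace.exp ((-Complex.I * s) • B)) =
    Complex.exp (2 * Complex.I * (t - s)) • Matrix.single (j, k) (k, j) (1 : ℂ) +
      Complex.exp (-(2 * Complex.I * (t - s))) • Matrix.single (k, j) (j, k) (1 : ℂ) := by
  rw [smulB_eq_diagonal d j k hjk (Complex.I * t) B hB,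
      smulB_eq_diagonal d j k hjk (Complex.I * s) B hB,
      smulB_eq_diagonal d j k hjk (-Complex.I * t) B hB,
      smulB_eq_diagonal d j k hjk (-Complex.I * s) B hB,
      Matrix.exp_diagonal, Matrix.exp_diagonal, Matrix.exp_diagonal, Matrix.exp_diagonal,
      diagonal_kronecker_diagonal, diagonal_kronecker_diagonal, hS]
  rw [mul_add, add_mul, diag_mul_std_mul_diag, diag_mul_std_mul_diag]
  have hexp : ∀ z : ℂ, NormedSpace.exp z = Complex.exp z := fun z =>
    (Complex.exp_eq_exp_ℂ ▸ rfl)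
  congr 1
  · congr 1
    simp only [Pi.coe_exp, hjk, if_neg, if_pos, hjk.symm, ite_true, ite_false, hexp]
    rw [← Complex.exp_add, ← Complex.exp_add, ← Complex.exp_add]
    ring_nf
  · congr 1
    simp only [Pi.coe_exp, hjk, if_neg, if_pos, hjk.symm, ite_true, ite_false, hexp]
    rw [← Complex.exp_add, ← Complex.exp_add, ← Complex.exp_add]
    ring_nf

theorem exchange_conjugation_depends_only_on_difference
    (d : ℕ) (hd : 2 ≤ d) (j k : Fin d) (hjk : j ≠ k)
    (S : Matrix (Fin d × Fin d) (Fin d × Fin d) ℂ)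
    (hS : S = Matrix.single (j, k) (k, j) (1 : ℂ) +
        Matrix.single (k, j) (j, k) (1 : ℂ))
    (B : Matrix (Fin d) (Fin d) ℂ)
    (hB : B = Matrix.single j j (1 : ℂ) - Matrix.single k k (1 : ℂ))
    (α β α' β' : ℝ) (hdiff : α - β = α' - β') :
    (NormedSpace.exp ((Complex.I * α) • B) ⊗ₖ NormedSpace.exp ((Complex.I * β) • B)) * S *
      (NormedSpace.exp ((-Complex.I * α) • B) ⊗ₖ NormedSpace.exp ((-Complex.I * β) • B)) =
    (NormedSpace.exp ((Complex.I * α') • B) ⊗ₖ NormedSpace.exp ((Complex.I * β') • B)) * S *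
      (NormedSpace.exp ((-Complex.I * α') • B) ⊗ₖ NormedSpace.exp ((-Complex.I * β') • B)) := by
  rw [conj_form d j k hjk S hS B hB α β, conj_form d j k hjk S hS B hB α' β']
  have h : (α : ℂ) - β = (α' : ℂ) - β' := by exact_mod_cast congrArg Complex.ofReal hdiff
  rw [h]
end
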